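/- arXiv:1804.08309 — 3 statements merged into one kernel-verified Lean document; each statement's English description precedes it below -/
import Mathlib

section
/- A real binary form f of degree d has real rank at most r if and only if the degree-r graded piece (f^⊥)_r of its apolar ideal contains a nonzero form g ∈ ℝ[u,v]_r that splits into r pairwise non-proportional real linear factors. -/
open MvPolynomial

/-- The partial derivative `∂_x` as a linear endomorphism of `ℝ[x,y]`. -/
noncomputable def pd0 : Module.End ℝ (MvPolynomial (Fin 2) ℝ) :=
  (pderiv (0 : Fin 2)).toLinearMap

/-- The partial derivative `∂_y` as a linear endomorphism of `ℝ[x,y]`. -/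
noncomputable def pd1 : Module.End ℝ (MvPolynomial (Fin 2) ℝ) :=
  (pderiv (1 : Fin 2)).toLinearMap

/-- The action of a dual form `g(u,v)` on a binary form `f(x,y)` by substituting
`u = ∂_x`, `v = ∂_y`. -/
noncomputable def diffOp (g f : MvPolynomial (Fin 2) ℝ) : MvPolynomial (Fin 2) ℝ :=
  (AddMonoidAlgebra.coeff g).sum fun m c => c • ((pd0 ^ m 0 * pd1 ^ m 1) f)

/-- The linear binary form `a·x + b·y`. -/
noncomputable def linForm (a b : ℝ) : MvPolynomial (Fin 2) ℝ := C a * X 0 + C b * X 1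

/-- The real rank of a binary form of degree `d`: the least `r` admitting a
decomposition `f = ∑ cᵢ (aᵢ x + bᵢ y)^d`. -/
noncomputable def realRank (d : ℕ) (f : MvPolynomial (Fin 2) ℝ) : ℕ :=
  sInf {r | ∃ c a b : Fin r → ℝ, f = ∑ i, C (c i) * linForm (a i) (b i) ^ d}

lemma commute_pd : Commute pd0 pd1 := by
  refine LinearMap.ext fun f => ?_
  show pderiv 0 (pderiv 1 f) = pderiv 1 (pderiv 0 f)
  induction f using MvPolynomial.induction_on' with
  | monomial m a =>
    simp only [pderiv_monomial]
    rw [tsub_right_comm]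
    congr 1
    simp [Finsupp.tsub_apply, Finsupp.single_apply]
    ring
  | add p q hp hq => simp only [map_add, hp, hq]

noncomputable def psi : Multiplicative (Fin 2 →₀ ℕ) →* Module.End ℝ (MvPolynomial (Fin 2) ℝ) where
  toFun m := pd0 ^ (Multiplicative.toAdd m) 0 * pd1 ^ (Multiplicative.toAdd m) 1
  map_one' := by simp
  map_mul' m n := by
    show pd0 ^ (Multiplicative.toAdd m + Multiplicative.toAdd n) 0 *
        pd1 ^ (Multiplicative.toAdd m + Multiplicative.toAdd n) 1 = _
    simp only [Finsupp.add_apply, pow_add]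
    rw [mul_assoc, ← mul_assoc (pd0 ^ (Multiplicative.toAdd n) 0),
      (commute_pd.pow_pow ((Multiplicative.toAdd n) 0) ((Multiplicative.toAdd m) 1)).eq,
      mul_assoc, ← mul_assoc]

noncomputable def Phi : MvPolynomial (Fin 2) ℝ →ₐ[ℝ] Module.End ℝ (MvPolynomial (Fin 2) ℝ) :=
  AddMonoidAlgebra.lift ℝ _ (Fin 2 →₀ ℕ) psi

lemma diffOp_eq (g f : MvPolynomial (Fin 2) ℝ) : diffOp g f = Phi g f := by
  rw [diffOp]
  erw [AddMonoidAlgebra.lift_apply]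
  rw [Finsupp.sum, Finsupp.sum, LinearMap.coe_sum, Finset.sum_apply]
  exact Finset.sum_congr rfl fun m _ => rfl


lemma diffOp_mul (g h f : MvPolynomial (Fin 2) ℝ) :
    diffOp (g * h) f = diffOp g (diffOp h f) := by
  simp only [diffOp_eq, map_mul, Module.End.mul_apply]

lemma diffOp_one (f : MvPolynomial (Fin 2) ℝ) : diffOp 1 f = f := by
  simp only [diffOp_eq, map_one, Module.End.one_apply]

lemma diffOp_zero_right (g : MvPolynomial (Fin 2) ℝ) : diffOp g 0 = 0 := by
  simp only [diffOp_eq, map_zero]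

lemma diffOp_add_right (g f1 f2 : MvPolynomial (Fin 2) ℝ) :
    diffOp g (f1 + f2) = diffOp g f1 + diffOp g f2 := by
  simp only [diffOp_eq, map_add]

lemma diffOp_smul_right (g : MvPolynomial (Fin 2) ℝ) (c : ℝ) (f : MvPolynomial (Fin 2) ℝ) :
    diffOp g (c • f) = c • diffOp g f := by
  simp only [diffOp_eq, map_smul]

lemma diffOp_sum_right {ι : Type*} (s : Finset ι) (g : MvPolynomial (Fin 2) ℝ)
    (F : ι → MvPolynomial (Fin 2) ℝ) :
    diffOp g (∑ i ∈ s, F i) = ∑ i ∈ s, diffOp g (F i) := by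
  simp only [diffOp_eq, map_sum]

lemma Phi_X (i : Fin 2) : Phi (X i) = (pderiv i).toLinearMap := by
  show Phi (AddMonoidAlgebra.single (Finsupp.single i 1) 1) = _
  erw [AddMonoidAlgebra.lift_single]
  show (1:ℝ) • (pd0 ^ (Finsupp.single i 1) 0 * pd1 ^ (Finsupp.single i 1) 1) = _
  fin_cases i <;> simp [pd0, pd1, Finsupp.single_apply]

lemma diffOp_linForm (a b : ℝ) (f : MvPolynomial (Fin 2) ℝ) :
    diffOp (linForm a b) f = a • pderiv 0 f + b • pderiv 1 f := by
  rw [diffOp_eq, linForm]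
  rw [map_add, map_mul, map_mul, Phi_X, Phi_X]
  have hC : ∀ c : ℝ, Phi (C c) = c • (1 : Module.End ℝ (MvPolynomial (Fin 2) ℝ)) := by
    intro c
    rw [show (C c : MvPolynomial (Fin 2) ℝ) = c • 1 by rw [smul_eq_C_mul, mul_one], map_smul,
      map_one]
  simp [hC, LinearMap.add_apply, LinearMap.smul_apply]

lemma degree_fin2 (d : Fin 2 →₀ ℕ) : d.degree = d 0 + d 1 := by
  rw [Finsupp.degree, ← Fin.sum_univ_two (fun i => d i)]
  exact Finset.sum_subset (Finset.subset_univ _) (by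
    intro x _ hx
    simpa using Finsupp.notMem_support_iff.mp hx)

lemma isHomogeneous_iff2 {φ : MvPolynomial (Fin 2) ℝ} {n : ℕ} :
    φ.IsHomogeneous n ↔ ∀ d : Fin 2 →₀ ℕ, coeff d φ ≠ 0 → d 0 + d 1 = n := by
  constructor
  · intro h d hd
    have := h hd
    rw [Pi.one_def, ← Finsupp.degree_eq_weight_one] at this
    rw [← degree_fin2 d, this]
  · intro h d hd
    rw [Pi.one_def, ← Finsupp.degree_eq_weight_one, degree_fin2]
    exact h d hd

lemma eq_C_of_isHomogeneous_zero {φ : MvPolynomial (Fin 2) ℝ} (h : φ.IsHomogeneous 0) :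
    ∃ c : ℝ, φ = C c := by
  refine ⟨coeff 0 φ, MvPolynomial.ext _ _ fun m => ?_⟩
  rw [coeff_C]
  by_cases hm : (0 : Fin 2 →₀ ℕ) = m
  · simp [← hm]
  · simp only [hm, if_false]
    by_contra hc
    have h2 := (isHomogeneous_iff2.mp h) m hc
    have h0 : m 0 = 0 := by omega
    have h1 : m 1 = 0 := by omega
    apply hm
    ext i
    obtain rfl | rfl : i = 0 ∨ i = 1 := by omega
    · simp [h0]
    · simp [h1]

lemma isHomogeneous_pderiv {φ : MvPolynomial (Fin 2) ℝ} {n : ℕ} (h : φ.IsHomogeneous (n + 1))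
    (i : Fin 2) : (pderiv i φ).IsHomogeneous n := by
  rw [← MvPolynomial.support_sum_monomial_coeff φ, map_sum]
  apply IsHomogeneous.sum
  intro m hm
  rw [pderiv_monomial]
  by_cases hmi : m i = 0
  · rw [hmi]
    simp only [Nat.cast_zero, mul_zero, monomial_zero]
    exact isHomogeneous_zero _ _ n
  · apply isHomogeneous_monomial
    have hdeg := (isHomogeneous_iff2.mp h) m (MvPolynomial.mem_support_iff.mp hm)
    rw [degree_fin2]
    simp only [Finsupp.tsub_apply, Finsupp.single_apply]
    obtain rfl | rfl : i = 0 ∨ i = 1 := by omega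
    · simp only [show ((0:Fin 2) = 0) = True by simp, show ((0:Fin 2) = 1) = False by simp,
        if_true, if_false]
      omega
    · simp only [show ((1:Fin 2) = 1) = True by simp, show ((1:Fin 2) = 0) = False by simp,
        if_true, if_false]
      omega

lemma euler2 {φ : MvPolynomial (Fin 2) ℝ} {n : ℕ} (h : φ.IsHomogeneous n) :
    X 0 * pderiv 0 φ + X 1 * pderiv 1 φ = (n : ℝ) • φ := by
  conv_lhs => rw [← MvPolynomial.support_sum_monomial_coeff φ]
  rw [map_sum, map_sum, Finset.mul_sum, Finset.mul_sum, ← Finset.sum_add_distrib]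
  conv_rhs => rw [← MvPolynomial.support_sum_monomial_coeff φ, Finset.smul_sum]
  refine Finset.sum_congr rfl fun m hm => ?_
  have hdeg := (isHomogeneous_iff2.mp h) m (MvPolynomial.mem_support_iff.mp hm)
  have key : ∀ i : Fin 2, X i * pderiv i (monomial m (coeff m φ)) =
      (m i : ℝ) • monomial m (coeff m φ) := by
    intro i
    rw [pderiv_monomial]
    by_cases hmi : m i = 0
    · simp [hmi]
    · rw [X, monomial_mul]
      have hrec : (Finsupp.single i 1) + (m - Finsupp.single i 1) = m := by
        ext j
        simp only [Finsupp.add_apply, Finsupp.tsub_apply, Finsupp.single_apply]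
        by_cases hj : i = j
        · subst hj; simp; omega
        · simp [hj]
      rw [hrec, smul_monomial]
      congr 1
      rw [smul_eq_mul]
      ring
  rw [key 0, key 1, ← add_smul, ← hdeg]
  push_cast
  ring_nf

lemma pderiv0_linForm (a b : ℝ) : pderiv 0 (linForm a b) = C a := by
  simp [linForm, pderiv_X_self, pderiv_X_of_ne (by decide : (1:Fin 2) ≠ 0)]

lemma pderiv1_linForm (a b : ℝ) : pderiv 1 (linForm a b) = C b := by
  simp [linForm, pderiv_X_self, pderiv_X_of_ne (by decide : (0:Fin 2) ≠ 1)]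

lemma isHomogeneous_linForm (a b : ℝ) : (linForm a b).IsHomogeneous 1 :=
  IsHomogeneous.add (isHomogeneous_C_mul_X a 0) (isHomogeneous_C_mul_X b 1)

lemma isHomogeneous_linForm_pow (a b : ℝ) (d : ℕ) : (linForm a b ^ d).IsHomogeneous d := by
  simpa using (isHomogeneous_linForm a b).pow d

lemma linForm_ne_zero {a b : ℝ} (h : (a, b) ≠ (0, 0)) : linForm a b ≠ 0 := by
  intro hz
  apply h
  have ha := congrArg (coeff (Finsupp.single 0 1)) hz
  have hb := congrArg (coeff (Finsupp.single 1 1)) hz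
  simp [linForm, coeff_X', Finsupp.single_eq_single_iff] at ha hb
  simp [ha, hb]

lemma diffOp_linForm_pow (a b p q : ℝ) (m : ℕ) :
    diffOp (linForm a b) (linForm p q ^ (m + 1)) =
      (((m : ℝ) + 1) * (a * p + b * q)) • linForm p q ^ m := by
  rw [diffOp_linForm, pderiv_pow, pderiv_pow, pderiv0_linForm, pderiv1_linForm]
  simp only [smul_eq_C_mul, Nat.add_sub_cancel, map_add, map_mul, map_one, map_natCast]
  push_cast
  ring

lemma isHomogeneous_smul {c : ℝ} {φ : MvPolynomial (Fin 2) ℝ} {n : ℕ} (h : φ.IsHomogeneous n) :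
    (c • φ).IsHomogeneous n := by
  rw [smul_eq_C_mul]; exact h.C_mul c

lemma diffOp_linForm_hom {d : ℕ} (a b : ℝ) {f : MvPolynomial (Fin 2) ℝ}
    (hf : f.IsHomogeneous d) :
    (diffOp (linForm a b) f).IsHomogeneous (d - 1) ∧
      (d = 0 → diffOp (linForm a b) f = 0) := by
  cases d with
  | zero =>
    obtain ⟨c, rfl⟩ := eq_C_of_isHomogeneous_zero hf
    have : diffOp (linForm a b) (C c) = 0 := by
      rw [diffOp_linForm]
      simp [pderiv_C]
    exact ⟨this ▸ isHomogeneous_zero _ _ _, fun _ => this⟩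
  | succ n =>
    constructor
    · rw [diffOp_linForm]
      exact (isHomogeneous_smul (isHomogeneous_pderiv hf 0)).add
        (isHomogeneous_smul (isHomogeneous_pderiv hf 1))
    · intro h; omega

lemma diffOp_prod_hom {r : ℕ} : ∀ {d : ℕ} {f : MvPolynomial (Fin 2) ℝ}, f.IsHomogeneous d →
    ∀ (a b : Fin r → ℝ),
    (diffOp (∏ i, linForm (a i) (b i)) f).IsHomogeneous (d - r) ∧
      (d < r → diffOp (∏ i, linForm (a i) (b i)) f = 0) := by
  induction r with
  | zero =>
    intro d f hf a b
    simp only [Finset.univ_eq_empty, Finset.prod_empty, diffOp_one]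
    exact ⟨by simpa using hf, fun h => absurd h (by omega)⟩
  | succ r IH =>
    intro d f hf a b
    rw [Fin.prod_univ_castSucc, diffOp_mul]
    obtain ⟨h1, h2⟩ := diffOp_linForm_hom (a (Fin.last r)) (b (Fin.last r)) hf
    obtain ⟨h3, h4⟩ := IH h1 (fun i => a i.castSucc) (fun i => b i.castSucc)
    refine ⟨by simpa [show d - 1 - r = d - (r+1) by omega] using h3, fun hlt => ?_⟩
    cases d with
    | zero => rw [h2 rfl, diffOp_zero_right]
    | succ n => exact h4 (by omega)

lemma pderiv_comm2 (f : MvPolynomial (Fin 2) ℝ) :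
    pderiv (0 : Fin 2) (pderiv (1 : Fin 2) f) = pderiv 1 (pderiv 0 f) := by
  have := LinearMap.congr_fun commute_pd.eq f
  simpa [Module.End.mul_apply, pd0, pd1] using this

lemma ode {a b : ℝ} (hab : (a, b) ≠ (0, 0)) : ∀ {k : ℕ} {g : MvPolynomial (Fin 2) ℝ},
    g.IsHomogeneous k → diffOp (linForm a b) g = 0 →
    ∃ c : ℝ, g = C c * linForm b (-a) ^ k := by
  intro k
  induction k with
  | zero =>
    intro g hg _
    obtain ⟨c, rfl⟩ := eq_C_of_isHomogeneous_zero hg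
    exact ⟨c, by simp⟩
  | succ k IH =>
    intro g hg hpde
    have hL : linForm b (-a) ≠ 0 := by
      apply linForm_ne_zero
      intro hc
      apply hab
      simp only [Prod.mk.injEq] at hc ⊢
      exact ⟨by linarith [hc.2], hc.1⟩
    have hgx : (pderiv 0 g).IsHomogeneous k := isHomogeneous_pderiv hg 0
    have hgy : (pderiv 1 g).IsHomogeneous k := isHomogeneous_pderiv hg 1
    have hpdex : diffOp (linForm a b) (pderiv 0 g) = 0 := by
      have h := congrArg (pderiv (0 : Fin 2)) hpde
      rw [diffOp_linForm] at h ⊢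
      rw [map_add, Derivation.map_smul, Derivation.map_smul, map_zero] at h
      rw [← pderiv_comm2]
      exact h
    have hpdey : diffOp (linForm a b) (pderiv 1 g) = 0 := by
      have h := congrArg (pderiv (1 : Fin 2)) hpde
      rw [diffOp_linForm] at h ⊢
      rw [map_add, Derivation.map_smul, Derivation.map_smul, map_zero] at h
      rw [pderiv_comm2]
      exact h
    obtain ⟨c₁, hc₁⟩ := IH hgx hpdex
    obtain ⟨c₂, hc₂⟩ := IH hgy hpdey
    have hrel : a * c₁ + b * c₂ = 0 := by
      have h0 : diffOp (linForm a b) g = C (a * c₁ + b * c₂) * linForm b (-a) ^ k := by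
        rw [diffOp_linForm, hc₁, hc₂, smul_eq_C_mul, smul_eq_C_mul]
        simp only [map_add, map_mul]
        ring
      rw [hpde] at h0
      rcases mul_eq_zero.mp h0.symm with h | h
      · exact C_eq_zero.mp h
      · exact absurd h (pow_ne_zero _ hL)
    obtain ⟨t, ht1, ht2⟩ : ∃ t : ℝ, c₁ = t * b ∧ c₂ = t * (-a) := by
      by_cases ha : a = 0
      · have hb : b ≠ 0 := fun hb => hab (by simp [ha, hb])
        refine ⟨c₁ / b, by field_simp, ?_⟩
        have h1 : b * c₂ = 0 := by rw [ha] at hrel; linarith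
        have h2 : c₂ = 0 := by
          rcases mul_eq_zero.mp h1 with h | h
          · exact absurd h hb
          · exact h
        simp [h2, ha]
      · refine ⟨-c₂ / a, ?_, by field_simp⟩
        rw [div_mul_eq_mul_div, eq_div_iff ha]
        linear_combination hrel
    have heuler := euler2 hg
    push_cast at heuler
    rw [hc₁, hc₂, ht1, ht2] at heuler
    have hkey : ((k : ℝ) + 1) • g = C t * linForm b (-a) ^ (k + 1) := by
      rw [← heuler, pow_succ]
      simp only [linForm, map_mul, map_neg]
      ring
    have hk1 : ((k : ℝ) + 1) ≠ 0 := by positivity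
    refine ⟨t / ((k : ℝ) + 1), ?_⟩
    have h5 := congrArg (fun p => (((k : ℝ) + 1)⁻¹) • p) hkey
    simp only [smul_smul, inv_mul_cancel₀ hk1, one_smul] at h5
    rw [h5, smul_eq_C_mul, ← mul_assoc, ← map_mul]
    congr 2
    field_simp

lemma diffOp_prod_pow {r : ℕ} : ∀ (a b : Fin r → ℝ) (p q : ℝ),
    (∀ i, a i * p + b i * q ≠ 0) → ∀ d, r ≤ d →
    ∃ e : ℝ, e ≠ 0 ∧ diffOp (∏ i, linForm (a i) (b i)) (linForm p q ^ d)
      = e • linForm p q ^ (d - r) := by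
  induction r with
  | zero =>
    intro a b p q _ d _
    refine ⟨1, one_ne_zero, ?_⟩
    simp [diffOp_one]
  | succ r IH =>
    intro a b p q h d hd
    obtain ⟨m, rfl⟩ : ∃ m, d = m + 1 := ⟨d - 1, by omega⟩
    rw [Fin.prod_univ_castSucc, diffOp_mul, diffOp_linForm_pow, diffOp_smul_right]
    obtain ⟨e, he, heq⟩ := IH (fun i => a i.castSucc) (fun i => b i.castSucc) p q
      (fun i => h i.castSucc) m (by omega)
    refine ⟨((m : ℝ) + 1) * (a (Fin.last r) * p + b (Fin.last r) * q) * e, ?_, ?_⟩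
    · exact mul_ne_zero (mul_ne_zero (by positivity) (h (Fin.last r))) he
    · rw [heq, smul_smul]
      congr 2
      omega

lemma diffOp_sub_right (g f1 f2 : MvPolynomial (Fin 2) ℝ) :
    diffOp g (f1 - f2) = diffOp g f1 - diffOp g f2 := by
  simp only [diffOp_eq, map_sub]

lemma main_lemma {r : ℕ} : ∀ {d : ℕ} {f : MvPolynomial (Fin 2) ℝ}, f.IsHomogeneous d →
    ∀ (a b : Fin r → ℝ), (∀ i, (a i, b i) ≠ (0, 0)) →
    (∀ i j, i ≠ j → a i * b j ≠ a j * b i) →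
    diffOp (∏ i, linForm (a i) (b i)) f = 0 →
    ∃ c : Fin r → ℝ, f = ∑ i, C (c i) * linForm (b i) (-(a i)) ^ d := by
  induction r with
  | zero =>
    intro d f hf a b _ _ hzero
    simp only [Finset.univ_eq_empty, Finset.prod_empty, diffOp_one] at hzero
    exact ⟨fun i => 0, by simp [hzero]⟩
  | succ r IH =>
    intro d f hf a b hnz hdist hzero
    have hsplit : (∏ i : Fin (r+1), linForm (a i) (b i)) =
        linForm (a (Fin.last r)) (b (Fin.last r)) *
          ∏ i : Fin r, linForm (a i.castSucc) (b i.castSucc) := by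
      rw [Fin.prod_univ_castSucc]; ring
    rw [hsplit, diffOp_mul] at hzero
    set g := diffOp (∏ i : Fin r, linForm (a i.castSucc) (b i.castSucc)) f with hg
    have hnz' : ∀ i : Fin r, (a i.castSucc, b i.castSucc) ≠ (0, 0) := fun i => hnz i.castSucc
    have hdist' : ∀ i j : Fin r, i ≠ j →
        a i.castSucc * b j.castSucc ≠ a j.castSucc * b i.castSucc :=
      fun i j hij => hdist i.castSucc j.castSucc (by simpa using hij)
    by_cases hgz : g = 0
    · obtain ⟨c, hc⟩ := IH hf _ _ hnz' hdist' hgz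
      refine ⟨Fin.snoc c 0, ?_⟩
      rw [Fin.sum_univ_castSucc]
      simp only [Fin.snoc_castSucc, Fin.snoc_last, map_zero, zero_mul, add_zero]
      exact hc
    · have hghom := (diffOp_prod_hom hf (fun i => a i.castSucc) (fun i => b i.castSucc)).1
      have hrd : r ≤ d := by
        by_contra hlt
        exact hgz ((diffOp_prod_hom hf (fun i => a i.castSucc)
          (fun i => b i.castSucc)).2 (by omega))
      obtain ⟨c, hcg⟩ := ode (hnz (Fin.last r)) hghom hzero
      obtain ⟨e, he, heq⟩ := diffOp_prod_pow (fun i => a i.castSucc) (fun i => b i.castSucc)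
        (b (Fin.last r)) (-(a (Fin.last r)))
        (fun i => by
          have hd := hdist i.castSucc (Fin.last r) (Fin.castSucc_lt_last i).ne
          intro hc0
          exact hd (by linear_combination hc0)) d hrd
      set L := linForm (b (Fin.last r)) (-(a (Fin.last r))) with hL
      set f₀ := (c / e) • L ^ d with hf₀
      have hdiff : diffOp (∏ i : Fin r, linForm (a i.castSucc) (b i.castSucc)) (f - f₀) = 0 := by
        rw [diffOp_sub_right, hf₀, diffOp_smul_right, heq, smul_smul, div_mul_cancel₀ _ he,
          hcg, smul_eq_C_mul, sub_self]
      have hfhom : (f - f₀).IsHomogeneous d := by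
        apply hf.sub
        rw [hf₀]
        exact isHomogeneous_smul (isHomogeneous_linForm_pow _ _ d)
      obtain ⟨c', hc'⟩ := IH hfhom _ _ hnz' hdist' hdiff
      refine ⟨Fin.snoc c' (c / e), ?_⟩
      rw [Fin.sum_univ_castSucc]
      simp only [Fin.snoc_castSucc, Fin.snoc_last]
      have hsplitf : f = (f - f₀) + f₀ := by ring
      rw [hsplitf, hc', hf₀, smul_eq_C_mul, hL]

noncomputable def rho : Option ℝ → ℝ × ℝ := fun o => o.elim (1, 0) (fun t => (t, 1))

lemma rho_ne_zero (o : Option ℝ) : rho o ≠ (0, 0) := by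
  cases o <;> simp [rho]

lemma rho_cross {o o' : Option ℝ} (h : o ≠ o') :
    (rho o).1 * (rho o').2 ≠ (rho o').1 * (rho o).2 := by
  cases o with
  | none =>
    cases o' with
    | none => exact absurd rfl h
    | some t => simp [rho]
  | some t =>
    cases o' with
    | none => simp [rho]
    | some t' =>
      simp only [rho, Option.elim, mul_one]
      intro he
      exact h (by rw [he])

lemma linForm_zero : linForm 0 0 = 0 := by simp [linForm]

/-- A real binary form `f` of degree `d` has real rank at most `r` iff the degree-`r`
part of its apolar ideal contains a (nonzero) form splitting into `r` pairwise
non-proportional real linear factors. -/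
theorem realRank_le_iff_real_rooted_apolar (d r : ℕ) (f : MvPolynomial (Fin 2) ℝ)
    (hf : f.IsHomogeneous d) :
    realRank d f ≤ r ↔
      ∃ a b : Fin r → ℝ, (∀ i, (a i, b i) ≠ (0, 0)) ∧
        (∀ i j, i ≠ j → a i * b j ≠ a j * b i) ∧
        diffOp (∏ i, linForm (a i) (b i)) f = 0 := by
  classical
  have hcast : ∀ (k : ℕ) (i j : Fin k), i ≠ j → ((i : ℕ) : ℝ) * 1 ≠ ((j : ℕ) : ℝ) * 1 := by
    intro k i j hij h
    apply hij
    have : ((i : ℕ) : ℝ) = ((j : ℕ) : ℝ) := by linarith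
    exact Fin.ext (Nat.cast_injective this)
  have hmem_of : ∀ (k : ℕ) (a b : Fin k → ℝ), (∀ i, (a i, b i) ≠ (0, 0)) →
      (∀ i j, i ≠ j → a i * b j ≠ a j * b i) →
      diffOp (∏ i, linForm (a i) (b i)) f = 0 →
      ∃ c p q : Fin k → ℝ, f = ∑ i, C (c i) * linForm (p i) (q i) ^ d := by
    intro k a b h1 h2 h3
    obtain ⟨c, hc⟩ := main_lemma hf a b h1 h2 h3
    exact ⟨c, fun i => b i, fun i => -(a i), hc⟩
  have hSne : Set.Nonempty
      {r | ∃ c a b : Fin r → ℝ, f = ∑ i, C (c i) * linForm (a i) (b i) ^ d} := by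
    refine ⟨d + 1, ?_⟩
    refine hmem_of (d + 1) (fun i => ((i : ℕ) : ℝ)) (fun _ => 1) (fun i => by simp) ?_ ?_
    · exact fun i j hij => hcast _ i j hij
    · exact (diffOp_prod_hom hf _ _).2 (by omega)
  constructor
  · intro hle
    have hm' : ∃ c a b : Fin (realRank d f) → ℝ,
        f = ∑ i, C (c i) * linForm (a i) (b i) ^ d := Nat.sInf_mem hSne
    obtain ⟨m, hmr, c, α, β, hdecomp⟩ : ∃ m, m ≤ r ∧ ∃ c a b : Fin m → ℝ,
        f = ∑ i, C (c i) * linForm (a i) (b i) ^ d := ⟨realRank d f, hle, hm'⟩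
    rcases Nat.eq_zero_or_pos r with rfl | hrpos
    · have hm0 : m = 0 := by omega
      subst hm0
      refine ⟨Fin.elim0, Fin.elim0, fun i => i.elim0, fun i => i.elim0, ?_⟩
      simp only [Finset.univ_eq_empty, Finset.prod_empty, diffOp_one]
      rw [hdecomp]
      simp
    cases d with
    | zero =>
      refine ⟨fun i => ((i : ℕ) : ℝ), fun _ => 1, fun i => by simp, ?_, ?_⟩
      · exact fun i j hij => hcast _ i j hij
      · exact (diffOp_prod_hom hf _ _).2 (by omega)
    | succ n =>
      set dual : Fin m → Option ℝ :=
        fun i => if α i = 0 then none else some (-(β i) / α i) with hdual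
      set S₀ : Finset (Option ℝ) := Finset.image dual Finset.univ with hS₀
      have hS₀card : S₀.card ≤ r := le_trans (Finset.card_image_le.trans (by simp)) hmr
      obtain ⟨T, hST, hTcard⟩ := Infinite.exists_superset_card_eq S₀ r hS₀card
      set eqv : T ≃ Fin r := T.equivFin.trans (finCongr hTcard) with heqv
      refine ⟨fun j => (rho ((eqv.symm j : T) : Option ℝ)).1,
        fun j => (rho ((eqv.symm j : T) : Option ℝ)).2, ?_, ?_, ?_⟩
      · intro j
        have := rho_ne_zero ((eqv.symm j : T) : Option ℝ)
        intro h
        apply this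
        rw [Prod.mk.injEq] at h
        exact Prod.ext h.1 h.2
      · intro i j hij
        apply rho_cross
        intro he
        exact hij (eqv.symm.injective (Subtype.coe_injective he))
      · rw [hdecomp, diffOp_sum_right]
        apply Finset.sum_eq_zero
        intro i _
        rw [← smul_eq_C_mul, diffOp_smul_right]
        suffices h : diffOp (∏ j, linForm ((rho ((eqv.symm j : T) : Option ℝ)).1)
            ((rho ((eqv.symm j : T) : Option ℝ)).2)) (linForm (α i) (β i) ^ (n + 1)) = 0 by
          rw [h, smul_zero]
        by_cases hz : linForm (α i) (β i) = 0
        · rw [hz, zero_pow (Nat.succ_ne_zero n), diffOp_zero_right]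
        · have hmem : dual i ∈ T := hST (Finset.mem_image_of_mem dual (Finset.mem_univ i))
          obtain ⟨j, hj⟩ : ∃ j, ((eqv.symm j : T) : Option ℝ) = dual i :=
            ⟨eqv ⟨dual i, hmem⟩, by simp⟩
          have hkill : diffOp (linForm ((rho ((eqv.symm j : T) : Option ℝ)).1)
              ((rho ((eqv.symm j : T) : Option ℝ)).2)) (linForm (α i) (β i) ^ (n + 1)) = 0 := by
            rw [diffOp_linForm_pow, hj]
            suffices hs : (rho (dual i)).1 * α i + (rho (dual i)).2 * β i = 0 by
              rw [hs, mul_zero, zero_smul]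
            by_cases hα : α i = 0
            · simp [hdual, hα, rho]
            · rw [hdual]
              simp only [hα, if_neg, if_false]
              simp only [rho, Option.elim]
              field_simp
              ring
          calc diffOp (∏ j, linForm ((rho ((eqv.symm j : T) : Option ℝ)).1)
                ((rho ((eqv.symm j : T) : Option ℝ)).2)) (linForm (α i) (β i) ^ (n + 1))
              = diffOp ((∏ k ∈ Finset.univ.erase j, linForm ((rho ((eqv.symm k : T) : Option ℝ)).1)
                ((rho ((eqv.symm k : T) : Option ℝ)).2)) *
                linForm ((rho ((eqv.symm j : T) : Option ℝ)).1)
                ((rho ((eqv.symm j : T) : Option ℝ)).2)) (linForm (α i) (β i) ^ (n + 1)) := by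
                rw [Finset.prod_erase_mul Finset.univ _ (Finset.mem_univ j)]
            _ = 0 := by rw [diffOp_mul, hkill, diffOp_zero_right]
  · rintro ⟨a, b, h1, h2, h3⟩
    obtain ⟨c, p, q, hc⟩ := hmem_of r a b h1 h2 h3
    exact Nat.sInf_le ⟨c, p, q, hc⟩
end

section
/- With g₀ = u⁴v − u²v³ − 2v⁵ and g₀' = −u⁵ + 2u³v² + 2uv⁴ in ℝ[u,v], one has u·g₀ + v·g₀' = u³v³, and both differential operators g₀(∂_x,∂_y) and g₀'(∂_x,∂_y) annihilate the degree-8 form f₀ = 8x⁸ + 112x⁶y² + 56x²y⁶ − y⁸. -/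
open MvPolynomial

lemma diffOp_add (g₁ g₂ f : MvPolynomial (Fin 2) ℝ) :
    diffOp (g₁ + g₂) f = diffOp g₁ f + diffOp g₂ f := by
  unfold diffOp
  rw [AddMonoidAlgebra.coeff_add]
  exact Finsupp.sum_add_index' (fun m => zero_smul _ _) (fun m c₁ c₂ => add_smul _ _ _)

lemma diffOp_monomial (m : Fin 2 →₀ ℕ) (c : ℝ) (f : MvPolynomial (Fin 2) ℝ) :
    diffOp (monomial m c) f = c • ((pd0 ^ m 0 * pd1 ^ m 1) f) := by
  unfold diffOp
  exact sum_monomial_eq (by simp)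

lemma diffOp_term (a b : ℕ) (c : ℝ) (f : MvPolynomial (Fin 2) ℝ) :
    diffOp (C c * X 0 ^ a * X 1 ^ b) f = c • ((pd0 ^ a * pd1 ^ b) f) := by
  have h : (C c * X 0 ^ a * X 1 ^ b : MvPolynomial (Fin 2) ℝ)
      = monomial (Finsupp.single 0 a + Finsupp.single 1 b) c := by
    rw [X_pow_eq_monomial, X_pow_eq_monomial, C_apply, monomial_mul, monomial_mul]
    simp
  rw [h, diffOp_monomial]
  simp [Finsupp.single_apply]

set_option maxHeartbeats 3000000 in
/-- With `g₀ = u⁴v − u²v³ − 2v⁵` and `g₀' = −u⁵ + 2u³v² + 2uv⁴`, one has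
`u·g₀ + v·g₀' = u³v³`, and both operators annihilate
`f₀ = 8x⁸ + 112x⁶y² + 56x²y⁶ − y⁸`. -/
theorem apolar_example_deg8_first :
    (X 0 * (X 0 ^ 4 * X 1 - X 0 ^ 2 * X 1 ^ 3 - 2 * X 1 ^ 5)
        + X 1 * (-X 0 ^ 5 + 2 * X 0 ^ 3 * X 1 ^ 2 + 2 * X 0 * X 1 ^ 4)
        = (X 0 ^ 3 * X 1 ^ 3 : MvPolynomial (Fin 2) ℝ)) ∧
    diffOp (X 0 ^ 4 * X 1 - X 0 ^ 2 * X 1 ^ 3 - 2 * X 1 ^ 5)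
        (8 * X 0 ^ 8 + 112 * X 0 ^ 6 * X 1 ^ 2 + 56 * X 0 ^ 2 * X 1 ^ 6 - X 1 ^ 8) = 0 ∧
    diffOp (-X 0 ^ 5 + 2 * X 0 ^ 3 * X 1 ^ 2 + 2 * X 0 * X 1 ^ 4)
        (8 * X 0 ^ 8 + 112 * X 0 ^ 6 * X 1 ^ 2 + 56 * X 0 ^ 2 * X 1 ^ 6 - X 1 ^ 8) = 0 := by
  refine ⟨by ring, ?_, ?_⟩
  · have hg : (X 0 ^ 4 * X 1 - X 0 ^ 2 * X 1 ^ 3 - 2 * X 1 ^ 5 : MvPolynomial (Fin 2) ℝ)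
        = C 1 * X 0 ^ 4 * X 1 ^ 1 + C (-1) * X 0 ^ 2 * X 1 ^ 3 + C (-2) * X 0 ^ 0 * X 1 ^ 5 := by
      simp only [map_one, map_neg, map_ofNat]
      ring
    rw [hg, diffOp_add, diffOp_add, diffOp_term, diffOp_term, diffOp_term]
    simp only [pd0, pd1, pow_succ, pow_zero, one_mul, Module.End.mul_apply, Module.End.one_apply,
      Derivation.coeFn_coe]
    simp only [show (8 : MvPolynomial (Fin 2) ℝ) = C 8 from (map_ofNat C 8).symm,
      show (112 : MvPolynomial (Fin 2) ℝ) = C 112 from (map_ofNat C 112).symm,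
      show (56 : MvPolynomial (Fin 2) ℝ) = C 56 from (map_ofNat C 56).symm]
    simp only [pderiv_mul, pderiv_pow, pderiv_X_self,
      pderiv_X_of_ne (show (0:Fin 2) ≠ 1 by decide),
      pderiv_X_of_ne (show (1:Fin 2) ≠ 0 by decide), pderiv_C_mul, pderiv_C, map_add, map_sub,
      pderiv_one, map_zero, mul_zero, zero_mul, add_zero, zero_add, mul_one, one_mul]
    simp only [map_ofNat]
    simp only [MvPolynomial.smul_eq_C_mul, map_one, map_neg, map_ofNat]
    ring
  · have hg : (-X 0 ^ 5 + 2 * X 0 ^ 3 * X 1 ^ 2 + 2 * X 0 * X 1 ^ 4 : MvPolynomial (Fin 2) ℝ)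
        = C (-1) * X 0 ^ 5 * X 1 ^ 0 + C 2 * X 0 ^ 3 * X 1 ^ 2 + C 2 * X 0 ^ 1 * X 1 ^ 4 := by
      simp only [map_one, map_neg, map_ofNat]
      ring
    rw [hg, diffOp_add, diffOp_add, diffOp_term, diffOp_term, diffOp_term]
    simp only [pd0, pd1, pow_succ, pow_zero, one_mul, Module.End.mul_apply, Module.End.one_apply,
      Derivation.coeFn_coe]
    simp only [show (8 : MvPolynomial (Fin 2) ℝ) = C 8 from (map_ofNat C 8).symm,
      show (112 : MvPolynomial (Fin 2) ℝ) = C 112 from (map_ofNat C 112).symm,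
      show (56 : MvPolynomial (Fin 2) ℝ) = C 56 from (map_ofNat C 56).symm]
    simp only [pderiv_mul, pderiv_pow, pderiv_X_self,
      pderiv_X_of_ne (show (0:Fin 2) ≠ 1 by decide),
      pderiv_X_of_ne (show (1:Fin 2) ≠ 0 by decide), pderiv_C_mul, pderiv_C, map_add, map_sub,
      pderiv_one, map_zero, mul_zero, zero_mul, add_zero, zero_add, mul_one, one_mul]
    simp only [map_ofNat]
    simp only [MvPolynomial.smul_eq_C_mul, map_one, map_neg, map_ofNat]
    ring
end

section
/- The real rank of a real binary form f of degree d is at least the number of distinct real roots of f in ℙ¹(ℝ). -/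
namespace RRAux
open Polynomial



/-- Projective root count bound function. -/
noncomputable def NN (d : ℕ) (P : ℝ[X]) : ℕ :=
  P.roots.toFinset.card + (if P.natDegree < d then 1 else 0)

noncomputable def SP {r : ℕ} (d : ℕ) (c α β : Fin r → ℝ) : ℝ[X] :=
  ∑ i, C (c i) * (C (α i) * X + C (β i)) ^ d

lemma natDegree_term_le (c α β : ℝ) (d : ℕ) :
    (C c * (C α * X + C β) ^ d).natDegree ≤ d := by
  refine (natDegree_C_mul_le _ _).trans ?_
  refine (natDegree_pow_le).trans ?_
  have h1 : (C α * X + C β).natDegree ≤ 1 := by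
    refine (natDegree_add_le _ _).trans ?_
    simp [natDegree_C]
    exact (natDegree_C_mul_le _ _).trans (by simp)
  calc d * (C α * X + C β).natDegree ≤ d * 1 := Nat.mul_le_mul_left d h1
  _ = d := by ring

lemma natDegree_SP_le {r : ℕ} (d : ℕ) (c α β : Fin r → ℝ) :
    (SP d c α β).natDegree ≤ d :=
  natDegree_sum_le_of_forall_le _ _ fun i _ => natDegree_term_le _ _ _ _

lemma lin_pow_eq (α β : ℝ) (d : ℕ) :
    (C α * X + C β) ^ d
      = ∑ k ∈ Finset.range (d+1), C (α ^ k * β ^ (d - k) * d.choose k) * X ^ k := by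
  rw [add_pow]
  refine Finset.sum_congr rfl fun k hk => ?_
  simp only [mul_pow, ← C_pow, ← C_eq_natCast, C_mul]
  ring

lemma reflect_sum {N : ℕ} {ι : Type*} (s : Finset ι) (f : ι → ℝ[X]) :
    reflect N (∑ i ∈ s, f i) = ∑ i ∈ s, reflect N (f i) := by
  induction s using Finset.cons_induction with
  | empty => simp [reflect_zero]
  | cons a s ha ih => simp [Finset.sum_cons, reflect_add, ih]

lemma reflect_lin_pow (α β : ℝ) (d : ℕ) :
    reflect d ((C α * X + C β) ^ d) = (C β * X + C α) ^ d := by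
  rw [lin_pow_eq, reflect_sum]
  have h1 : ∀ k ∈ Finset.range (d+1),
      reflect d (C (α ^ k * β ^ (d - k) * d.choose k) * X ^ k)
        = C (α ^ k * β ^ (d - k) * d.choose k) * X ^ (d - k) := by
    intro k hk
    rw [reflect_C_mul_X_pow, revAt_le (Nat.lt_succ_iff.mp (Finset.mem_range.mp hk))]
  rw [Finset.sum_congr rfl h1, lin_pow_eq]
  rw [← Finset.sum_range_reflect]
  refine Finset.sum_congr rfl fun k hk => ?_
  have hk' : k ≤ d := Nat.lt_succ_iff.mp (Finset.mem_range.mp hk)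
  have h2 : d + 1 - 1 - k = d - k := by omega
  rw [h2]
  have h3 : d - (d - k) = k := by omega
  rw [h3, Nat.choose_symm hk']
  ring



lemma comp_SP {r : ℕ} (d : ℕ) (c α β : Fin r → ℝ) (s : ℝ) :
    (SP d c α β).comp (X + C s) = SP d c α (fun i => α i * s + β i) := by
  unfold SP
  rw [Polynomial.sum_comp]
  refine Finset.sum_congr rfl fun i _ => ?_
  simp only [mul_comp, pow_comp, add_comp, C_comp, X_comp, C_add, C_mul]
  ring

lemma derivative_SP {r : ℕ} (d : ℕ) (c α β : Fin r → ℝ) :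
    derivative (SP d c α β) = SP (d-1) (fun i => c i * d * α i) α β := by
  unfold SP
  rw [map_sum]
  refine Finset.sum_congr rfl fun i _ => ?_
  rw [derivative_C_mul, derivative_pow]
  have : derivative (C (α i) * X + C (β i)) = C (α i) := by
    simp [derivative_C_mul]
  rw [this]
  simp only [C_mul]
  ring



lemma roots_comp (P : ℝ[X]) (hP : P ≠ 0) (s : ℝ) :
    (P.comp (X + C s)).roots.toFinset = Finset.image (fun z => z - s) P.roots.toFinset := by
  ext z
  simp only [Multiset.mem_toFinset, Finset.mem_image, mem_roots (comp_X_add_C_ne_zero_iff.mpr hP),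
    mem_roots hP, IsRoot, eval_comp, eval_add, eval_X, eval_C]
  constructor
  · intro h
    exact ⟨z + s, h, by ring⟩
  · rintro ⟨w, hw, rfl⟩
    simpa [sub_add_cancel] using hw

lemma NN_comp (d : ℕ) (P : ℝ[X]) (hP : P ≠ 0) (s : ℝ) :
    NN d (P.comp (X + C s)) = NN d P := by
  unfold NN
  rw [roots_comp P hP s, Finset.card_image_of_injective _ (sub_left_injective),
    natDegree_comp, natDegree_X_add_C, mul_one]

lemma natDegree_lt_iff_coeff (d : ℕ) (P : ℝ[X]) (hP : P ≠ 0) (hd : P.natDegree ≤ d) :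
    P.natDegree < d ↔ P.coeff d = 0 := by
  constructor
  · exact fun h => coeff_eq_zero_of_natDegree_lt h
  · intro h
    rcases lt_or_eq_of_le hd with h' | h'
    · exact h'
    · exfalso; exact (leadingCoeff_ne_zero.mpr hP) (by rwa [leadingCoeff, h'])

lemma natDegree_reflect_le (d : ℕ) (P : ℝ[X]) (hd : P.natDegree ≤ d) :
    (reflect d P).natDegree ≤ d := by
  refine natDegree_le_iff_coeff_eq_zero.mpr fun N hN => ?_
  rw [coeff_reflect, revAt_eq_self_of_lt hN]
  exact coeff_eq_zero_of_natDegree_lt (lt_of_le_of_lt hd hN)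

lemma zero_mem_roots_iff (P : ℝ[X]) (hP : P ≠ 0) :
    (0 : ℝ) ∈ P.roots.toFinset ↔ P.coeff 0 = 0 := by
  rw [Multiset.mem_toFinset, mem_roots hP, IsRoot, ← coeff_zero_eq_eval_zero]

lemma card_split (P : ℝ[X]) (hP : P ≠ 0) :
    P.roots.toFinset.card
      = (P.roots.toFinset.erase 0).card + (if P.coeff 0 = 0 then 1 else 0) := by
  by_cases h : P.coeff 0 = 0
  · rw [if_pos h]
    rw [Finset.card_erase_add_one ((zero_mem_roots_iff P hP).mpr h)]
  · rw [if_neg h, add_zero, Finset.erase_eq_of_notMem]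
    rw [zero_mem_roots_iff P hP]; exact h

lemma roots_reflect (d : ℕ) (P : ℝ[X]) (hP : P ≠ 0) (hd : P.natDegree ≤ d) :
    (reflect d P).roots.toFinset.erase 0
      = Finset.image (fun z : ℝ => z⁻¹) (P.roots.toFinset.erase 0) := by
  have hR : reflect d P ≠ 0 := by rwa [Ne, reflect_eq_zero_iff]
  ext z
  simp only [Finset.mem_erase, Finset.mem_image, Multiset.mem_toFinset, mem_roots hR,
    mem_roots hP, IsRoot]
  constructor
  · rintro ⟨hz, h⟩
    refine ⟨z⁻¹, ⟨inv_ne_zero hz, ?_⟩, by simp⟩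
    have : Invertible (z⁻¹ : ℝ) := invertibleOfNonzero (inv_ne_zero hz)
    have h2 : eval (⅟(z⁻¹) : ℝ) (reflect d P) = 0 ↔ eval (z⁻¹ : ℝ) P = 0 :=
      eval₂_reflect_eq_zero_iff (RingHom.id ℝ) (z⁻¹ : ℝ) d P hd
    rw [invOf_eq_inv, inv_inv] at h2
    exact h2.mp h
  · rintro ⟨w, ⟨hw, hw2⟩, rfl⟩
    refine ⟨inv_ne_zero hw, ?_⟩
    have : Invertible w := invertibleOfNonzero hw
    have h2 : eval (⅟w : ℝ) (reflect d P) = 0 ↔ eval w P = 0 :=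
      eval₂_reflect_eq_zero_iff (RingHom.id ℝ) w d P hd
    rw [invOf_eq_inv] at h2
    exact h2.mpr hw2

lemma NN_reflect (d : ℕ) (P : ℝ[X]) (hP : P ≠ 0) (hd : P.natDegree ≤ d) :
    NN d (reflect d P) = NN d P := by
  have hR : reflect d P ≠ 0 := by rwa [Ne, reflect_eq_zero_iff]
  have hRd : (reflect d P).natDegree ≤ d := natDegree_reflect_le d P hd
  have hc0 : (reflect d P).coeff 0 = P.coeff d := by rw [coeff_reflect, revAt_zero]
  have hcd : (reflect d P).coeff d = P.coeff 0 := by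
    rw [coeff_reflect, revAt_le (le_refl d), Nat.sub_self]
  unfold NN
  rw [card_split _ hR, card_split _ hP, roots_reflect d P hP hd,
    Finset.card_image_of_injective _ inv_injective]
  simp only [natDegree_lt_iff_coeff d _ hR hRd, natDegree_lt_iff_coeff d _ hP hd, hc0, hcd]
  ring


lemma reflect_SP {r : ℕ} (d : ℕ) (c α β : Fin r → ℝ) :
    reflect d (SP d c α β) = SP d c β α := by
  unfold SP
  rw [reflect_sum]
  refine Finset.sum_congr rfl fun i _ => ?_
  rw [reflect_C_mul, reflect_lin_pow]

lemma key (r : ℕ) : ∀ (d : ℕ) (c α β : Fin r → ℝ),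
    SP d c α β ≠ 0 → NN d (SP d c α β) ≤ r := by
  induction r with
  | zero =>
    intro d c α β h0
    exact absurd (by simp [SP]) h0
  | succ r IH =>
    intro d c α β h0
    have main : ∀ (c' α' β' : Fin (r+1) → ℝ), α' (Fin.last r) = 0 →
        SP d c' α' β' ≠ 0 → NN d (SP d c' α' β') ≤ r + 1 := by
      intro c' α' β' hlast h0'
      set P := SP d c' α' β' with hPdef
      have hdeg : P.natDegree ≤ d := natDegree_SP_le d c' α' β'
      have hder : derivative P = SP (d-1) (fun i : Fin r => c' i.castSucc * d * α' i.castSucc)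
          (fun i => α' i.castSucc) (fun i => β' i.castSucc) := by
        rw [hPdef, derivative_SP]
        unfold SP
        rw [Fin.sum_univ_castSucc]
        simp [hlast]
      by_cases hd0 : derivative P = 0
      · have hPC : P = C (P.coeff 0) := eq_C_of_derivative_eq_zero hd0
        have : NN d P ≤ 1 := by
          unfold NN
          rw [hPC, roots_C]
          simp only [Multiset.toFinset_zero, Finset.card_empty, zero_add]
          split <;> omega
        omega
      · have hIH : NN (d-1) (derivative P) ≤ r := by
          rw [hder] at hd0 ⊢
          exact IH (d-1) _ _ _ hd0
        have hnd : P.natDegree ≠ 0 := by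
          intro h
          exact hd0 (derivative_of_natDegree_zero h)
        have hroots : P.roots.toFinset.card ≤ (derivative P).roots.toFinset.card + 1 :=
          card_roots_toFinset_le_derivative P
        have hind : (if P.natDegree < d then 1 else 0)
            ≤ (if (derivative P).natDegree < d - 1 then 1 else 0) := by
          split
          · rename_i h
            have h1 : (derivative P).natDegree < P.natDegree := natDegree_derivative_lt hnd
            have : (derivative P).natDegree < d - 1 := by omega
            rw [if_pos this]
          · omega
        unfold NN at hIH ⊢
        omega
    by_cases hα : α (Fin.last r) = 0
    · exact main c α β hα h0
    · set l := Fin.last r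
      set s : ℝ := -(β l) / α l with hs
      have hcomp : (SP d c α β).comp (X + C s) = SP d c α (fun i => α i * s + β i) :=
        comp_SP d c α β s
      have hC0 : (SP d c α β).comp (X + C s) ≠ 0 := comp_X_add_C_ne_zero_iff.mpr h0
      have h0c : SP d c α (fun i => α i * s + β i) ≠ 0 := hcomp ▸ hC0
      have hrefl : reflect d (SP d c α (fun i => α i * s + β i))
          = SP d c (fun i => α i * s + β i) α := reflect_SP d c α _
      have h0r : SP d c (fun i => α i * s + β i) α ≠ 0 := by
        rw [← hrefl, Ne, reflect_eq_zero_iff]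
        exact h0c
      have hlast0 : α l * s + β l = 0 := by
        rw [hs]; field_simp; ring
      have hm := main c (fun i => α i * s + β i) α hlast0 h0r
      have e1 : NN d (SP d c (fun i => α i * s + β i) α)
          = NN d (SP d c α (fun i => α i * s + β i)) := by
        rw [← hrefl]
        exact NN_reflect d _ h0c (natDegree_SP_le d c α _)
      have e2 : NN d (SP d c α (fun i => α i * s + β i)) = NN d (SP d c α β) := by
        rw [← hcomp]
        exact NN_comp d _ h0 s
      omega


open Matrix in
lemma univ_exists (d : ℕ) (P : ℝ[X]) (hP : P.natDegree ≤ d) :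
    ∃ c : Fin (d+1) → ℝ, P = ∑ j, C (c j) * (X + C ((j : Fin (d+1)) : ℝ)) ^ d := by
  set lam : Fin (d+1) → ℝ := fun j => (j : ℕ) with hlam
  have hinj : Function.Injective lam := by
    intro i j h
    have : ((i : ℕ) : ℝ) = ((j : ℕ) : ℝ) := h
    exact Fin.ext (Nat.cast_injective this)
  set V : Matrix (Fin (d+1)) (Fin (d+1)) ℝ := (Matrix.vandermonde lam)ᵀ with hV
  have hdet : IsUnit V.det := by
    rw [hV, Matrix.det_transpose]
    exact isUnit_iff_ne_zero.mpr (Matrix.det_vandermonde_ne_zero_iff.mpr hinj)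
  set w : Fin (d+1) → ℝ := fun q => P.coeff (d - (q : ℕ)) / (d.choose (d - (q : ℕ))) with hw
  refine ⟨V⁻¹.mulVec w, ?_⟩
  have hsol : V.mulVec (V⁻¹.mulVec w) = w := by
    rw [Matrix.mulVec_mulVec, Matrix.mul_nonsing_inv _ hdet, Matrix.one_mulVec]
  have hsol' : ∀ q : Fin (d+1), ∑ j, lam j ^ (q : ℕ) * (V⁻¹.mulVec w) j = w q := by
    intro q
    have := congrFun hsol q
    rw [Matrix.mulVec, dotProduct] at this
    simpa [hV, Matrix.transpose_apply, Matrix.vandermonde] using this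
  apply Polynomial.ext
  intro k
  rw [Polynomial.finset_sum_coeff]
  simp only [Polynomial.coeff_C_mul, coeff_X_add_C_pow]
  by_cases hk : k ≤ d
  · have hq : d - k < d + 1 := by omega
    have := hsol' ⟨d - k, hq⟩
    have hdk : d - (d - k) = k := by omega
    rw [hw] at this
    simp only [hdk] at this
    have hch : (d.choose k : ℝ) ≠ 0 := by
      exact_mod_cast Nat.choose_pos hk |>.ne'
    calc P.coeff k = (∑ j, lam j ^ (d - k) * (V⁻¹.mulVec w) j) * (d.choose k : ℝ) := by
          rw [this]; field_simp
      _ = ∑ j, (V⁻¹.mulVec w) j * (lam j ^ (d - k) * (d.choose k : ℝ)) := by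
          rw [Finset.sum_mul]; exact Finset.sum_congr rfl fun j _ => by ring
  · push_neg at hk
    rw [Polynomial.coeff_eq_zero_of_natDegree_lt (lt_of_le_of_lt hP hk)]
    refine (Finset.sum_eq_zero fun j _ => ?_).symm
    rw [Nat.choose_eq_zero_of_lt hk]
    simp

end RRAux



open MvPolynomial

namespace RRAux


noncomputable def ψ : MvPolynomial (Fin 2) ℝ →ₐ[ℝ] Polynomial ℝ :=
  aeval ![Polynomial.X, 1]

noncomputable def fm (d k : ℕ) : Fin 2 →₀ ℕ :=
  Finsupp.single 0 k + Finsupp.single 1 (d - k)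

lemma fm_apply_zero (d k : ℕ) : fm d k 0 = k := by
  simp [fm, Finsupp.single_apply]

lemma fm_apply_one (d k : ℕ) : fm d k 1 = d - k := by
  simp [fm, Finsupp.single_apply]

lemma fm_inj {d k k' : ℕ} (h : fm d k = fm d k') : k = k' := by
  have := congrArg (fun m => m 0) h
  simpa [fm_apply_zero] using this

lemma eq_fm {d : ℕ} {f : MvPolynomial (Fin 2) ℝ} (hf : f.IsHomogeneous d)
    {m : Fin 2 →₀ ℕ} (hm : coeff m f ≠ 0) : m = fm d (m 0) ∧ m 0 ≤ d := by
  have hdeg : m.degree = d := by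
    by_contra h
    exact hm (hf.coeff_eq_zero h)
  have hsum : m 0 + m 1 = d := by
    rw [← hdeg, Finsupp.degree_apply]
    rw [Finset.sum_subset (Finset.subset_univ _)]
    · exact (Fin.sum_univ_two m).symm
    · intro x _ hx
      exact Finsupp.notMem_support_iff.mp hx
  constructor
  · ext i
    fin_cases i
    · show m 0 = fm d (m 0) 0
      rw [fm_apply_zero]
    · show m 1 = fm d (m 0) 1
      rw [fm_apply_one]
      omega
  · omega

lemma rep {d : ℕ} {f : MvPolynomial (Fin 2) ℝ} (hf : f.IsHomogeneous d) :
    f = ∑ k ∈ Finset.range (d+1), monomial (fm d k) (coeff (fm d k) f) := by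
  apply MvPolynomial.ext
  intro m
  rw [coeff_sum]
  simp only [coeff_monomial]
  by_cases hm : coeff m f = 0
  · rw [hm]
    refine (Finset.sum_eq_zero fun k _ => ?_).symm
    split
    · rename_i h; rw [h]; exact hm
    · rfl
  · obtain ⟨hmeq, hmle⟩ := eq_fm hf hm
    rw [Finset.sum_eq_single_of_mem (m 0) (Finset.mem_range.mpr (by omega))]
    · rw [if_pos hmeq.symm, ← hmeq]
    · intro k _ hk
      rw [if_neg]
      intro h
      exact hk (fm_inj (h.trans hmeq))

lemma monomial_fm_eq (d k : ℕ) (v : ℝ) :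
    (monomial (fm d k) v : MvPolynomial (Fin 2) ℝ) = C v * X 0 ^ k * X 1 ^ (d - k) := by
  rw [monomial_eq]
  rw [Finsupp.prod_fintype _ _ (fun i => pow_zero _)]
  rw [Fin.prod_univ_two, fm_apply_zero, fm_apply_one, mul_assoc]

lemma psi_monomial (d k : ℕ) (v : ℝ) :
    ψ (monomial (fm d k) v) = Polynomial.C v * Polynomial.X ^ k := by
  rw [monomial_fm_eq]
  simp only [map_mul, map_pow, ψ]
  simp [algebraMap_eq]

lemma psi_rep {d : ℕ} {f : MvPolynomial (Fin 2) ℝ} (hf : f.IsHomogeneous d) :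
    ψ f = ∑ k ∈ Finset.range (d+1), Polynomial.C (coeff (fm d k) f) * Polynomial.X ^ k := by
  conv_lhs => rw [rep hf]
  rw [map_sum]
  exact Finset.sum_congr rfl fun k _ => psi_monomial d k _

lemma coeffP (d : ℕ) (e : ℕ → ℝ) {k : ℕ} (hk : k ≤ d) :
    (∑ j ∈ Finset.range (d+1), Polynomial.C (e j) * Polynomial.X ^ j).coeff k = e k := by
  rw [Polynomial.finset_sum_coeff]
  rw [Finset.sum_eq_single_of_mem k (Finset.mem_range.mpr (by omega))]
  · simp
  · intro j _ hj
    rw [Polynomial.coeff_C_mul, Polynomial.coeff_X_pow, if_neg (Ne.symm hj), mul_zero]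

lemma psi_inj {d : ℕ} {f : MvPolynomial (Fin 2) ℝ} (hf : f.IsHomogeneous d)
    (h : ψ f = 0) : f = 0 := by
  rw [rep hf]
  refine Finset.sum_eq_zero fun k hk => ?_
  have hk' : k ≤ d := by have := Finset.mem_range.mp hk; omega
  have := coeffP d (fun j => coeff (fm d j) f) hk'
  rw [← psi_rep hf, h] at this
  simp only [Polynomial.coeff_zero] at this
  rw [← this]
  simp

lemma psi_linForm_pow (c a b : ℝ) (d : ℕ) :
    ψ (C c * linForm a b ^ d)
      = Polynomial.C c * (Polynomial.C a * Polynomial.X + Polynomial.C b) ^ d := by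
  simp only [map_mul, map_pow, ψ, linForm]
  simp [algebraMap_eq]

lemma eval_rep {d : ℕ} {f : MvPolynomial (Fin 2) ℝ} (hf : f.IsHomogeneous d) (v : Fin 2 → ℝ) :
    eval v f = ∑ k ∈ Finset.range (d+1), coeff (fm d k) f * v 0 ^ k * v 1 ^ (d - k) := by
  conv_lhs => rw [rep hf]
  rw [map_sum]
  refine Finset.sum_congr rfl fun k _ => ?_
  rw [monomial_fm_eq]
  simp



lemma linForm_isHomogeneous (a b : ℝ) : (linForm a b).IsHomogeneous 1 := by
  exact (isHomogeneous_C_mul_X a 0).add (isHomogeneous_C_mul_X b 1)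

lemma decomp_isHomogeneous {r : ℕ} (d : ℕ) (c a b : Fin r → ℝ) :
    (∑ i, C (c i) * linForm (a i) (b i) ^ d).IsHomogeneous d := by
  refine MvPolynomial.IsHomogeneous.sum _ _ _ fun i _ => ?_
  have := ((linForm_isHomogeneous (a i) (b i)).pow d).C_mul (c i)
  simpa using this


lemma psi_natDegree_le {d : ℕ} {f : MvPolynomial (Fin 2) ℝ} (hf : f.IsHomogeneous d) :
    (ψ f).natDegree ≤ d := by
  rw [psi_rep hf]
  refine Polynomial.natDegree_sum_le_of_forall_le _ _ fun j hj => ?_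
  refine (Polynomial.natDegree_C_mul_le _ _).trans ?_
  simpa using Nat.lt_succ_iff.mp (Finset.mem_range.mp hj)

lemma mv_exists {d : ℕ} {f : MvPolynomial (Fin 2) ℝ} (hf : f.IsHomogeneous d) :
    ∃ c lam : Fin (d+1) → ℝ, f = ∑ j, C (c j) * linForm 1 (lam j) ^ d := by
  obtain ⟨c, hc⟩ := univ_exists d (ψ f) (psi_natDegree_le hf)
  refine ⟨c, fun j => ((j : ℕ) : ℝ), ?_⟩
  set g : MvPolynomial (Fin 2) ℝ :=
    ∑ j : Fin (d+1), C (c j) * linForm 1 (((j : ℕ) : ℝ)) ^ d with hg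
  have hgh : g.IsHomogeneous d := decomp_isHomogeneous d c _ _
  have hψ : ψ (f - g) = 0 := by
    rw [map_sub, hg, map_sum]
    have h1 : ∀ j : Fin (d+1), ψ (C (c j) * linForm 1 (((j : ℕ) : ℝ)) ^ d)
        = Polynomial.C (c j) * (Polynomial.X + Polynomial.C ((j : ℕ) : ℝ)) ^ d := by
      intro j
      rw [psi_linForm_pow]
      simp
    rw [Finset.sum_congr rfl fun j _ => h1 j, ← hc, sub_self]
  exact sub_eq_zero.mp (psi_inj (hf.sub hgh) hψ)

lemma eval_div_root {d : ℕ} {f : MvPolynomial (Fin 2) ℝ} (hf : f.IsHomogeneous d)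
    {av bv : ℝ} (hb : bv ≠ 0) (h0 : eval ![av, bv] f = 0) :
    (ψ f).eval (av / bv) = 0 := by
  have he := eval_rep hf ![av, bv]
  simp only [Matrix.cons_val_zero, Matrix.cons_val_one, Matrix.head_cons] at he
  rw [h0] at he
  have hPe : (ψ f).eval (av / bv)
      = ∑ k ∈ Finset.range (d+1), coeff (fm d k) f * (av / bv) ^ k := by
    rw [psi_rep hf, Polynomial.eval_finset_sum]
    simp
  have halg : (ψ f).eval (av / bv) * bv ^ d = 0 := by
    rw [hPe, Finset.sum_mul]
    refine (Finset.sum_congr rfl fun k hk => ?_).trans he.symm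
    have hk' : k ≤ d := Nat.lt_succ_iff.mp (Finset.mem_range.mp hk)
    have h2 : (av / bv) ^ k * bv ^ d = av ^ k * bv ^ (d - k) := by
      rw [div_pow, pow_sub₀ _ hb hk']
      field_simp
    calc coeff (fm d k) f * (av / bv) ^ k * bv ^ d
        = coeff (fm d k) f * ((av / bv) ^ k * bv ^ d) := by ring
      _ = coeff (fm d k) f * (av ^ k * bv ^ (d - k)) := by rw [h2]
      _ = coeff (fm d k) f * av ^ k * bv ^ (d - k) := by ring
  rcases mul_eq_zero.mp halg with h | h
  · exact h
  · exact absurd h (pow_ne_zero d hb)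

lemma coeff_top_eq_zero {d : ℕ} {f : MvPolynomial (Fin 2) ℝ} (hf : f.IsHomogeneous d)
    {av : ℝ} (ha : av ≠ 0) (h0 : eval ![av, 0] f = 0) :
    coeff (fm d d) f = 0 := by
  have he := eval_rep hf ![av, (0:ℝ)]
  simp only [Matrix.cons_val_zero, Matrix.cons_val_one, Matrix.head_cons] at he
  rw [h0] at he
  rw [Finset.sum_eq_single_of_mem d (Finset.mem_range.mpr (by omega))] at he
  · rw [Nat.sub_self, pow_zero, mul_one] at he
    rcases mul_eq_zero.mp he.symm with h | h
    · exact h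
    · exact absurd h (pow_ne_zero d ha)
  · intro k hk hkd
    have : d - k ≠ 0 := by
      have := Finset.mem_range.mp hk
      omega
    rw [zero_pow this, mul_zero]

end RRAux

/-- The real rank of a nonzero real binary form `f` of degree `d` is at least the number
of its distinct real roots in `ℙ¹(ℝ)`: given `t` pairwise non-proportional nonzero real
roots of `f`, one has `t ≤ rk(f)`. -/
theorem card_real_roots_le_realRank (d t : ℕ) (f : MvPolynomial (Fin 2) ℝ)
    (hf : f.IsHomogeneous d) (hf0 : f ≠ 0) (a b : Fin t → ℝ)
    (hnz : ∀ i, (a i, b i) ≠ (0, 0))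
    (hnp : ∀ i j, i ≠ j → a i * b j ≠ a j * b i)
    (hroot : ∀ i, MvPolynomial.eval ![a i, b i] f = 0) :
    t ≤ realRank d f := by
  classical
  have hP0 : RRAux.ψ f ≠ 0 := fun h => hf0 (RRAux.psi_inj hf h)
  have hPdeg : (RRAux.ψ f).natDegree ≤ d := RRAux.psi_natDegree_le hf
  -- counting
  set S : Finset (Fin t) := Finset.univ.filter (fun i => ¬ b i = 0) with hSdef
  set T : Finset (Fin t) := Finset.univ.filter (fun i => b i = 0) with hTdef
  have hS : S.card ≤ (RRAux.ψ f).roots.toFinset.card := by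
    refine Finset.card_le_card_of_injOn (fun i => a i / b i) ?_ ?_
    · intro i hi
      have hbi : b i ≠ 0 := (Finset.mem_filter.mp hi).2
      rw [Finset.mem_coe, Multiset.mem_toFinset, Polynomial.mem_roots hP0]
      exact RRAux.eval_div_root hf hbi (hroot i)
    · intro i hi j hj hij
      by_contra hne
      have hbi : b i ≠ 0 := (Finset.mem_filter.mp hi).2
      have hbj : b j ≠ 0 := (Finset.mem_filter.mp hj).2
      exact hnp i j hne ((div_eq_div_iff hbi hbj).mp hij)
  have hT : T.card ≤ 1 := by
    refine Finset.card_le_one.mpr fun i hi j hj => ?_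
    by_contra hne
    have hbi : b i = 0 := (Finset.mem_filter.mp hi).2
    have hbj : b j = 0 := (Finset.mem_filter.mp hj).2
    exact hnp i j hne (by rw [hbi, hbj, mul_zero, mul_zero])
  have hST : T.card + S.card = t := by
    rw [hTdef, hSdef, Finset.card_filter_add_card_filter_not]
    simp
  have hind : T.Nonempty → (RRAux.ψ f).natDegree < d := by
    rintro ⟨i, hi⟩
    have hbi : b i = 0 := (Finset.mem_filter.mp hi).2
    have hai : a i ≠ 0 := by
      intro hh
      exact hnz i (by rw [hh, hbi])
    have h0 : eval ![a i, (0:ℝ)] f = 0 := by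
      have := hroot i
      rwa [hbi] at this
    have hcoeff : coeff (RRAux.fm d d) f = 0 := RRAux.coeff_top_eq_zero hf hai h0
    refine (RRAux.natDegree_lt_iff_coeff d _ hP0 hPdeg).mpr ?_
    rw [RRAux.psi_rep hf, RRAux.coeffP d _ le_rfl, hcoeff]
  have hcount : t ≤ RRAux.NN d (RRAux.ψ f) := by
    unfold RRAux.NN
    rcases T.eq_empty_or_nonempty with hTe | hTne
    · rw [hTe] at hST
      simp only [Finset.card_empty, zero_add] at hST
      omega
    · rw [if_pos (hind hTne)]
      omega
  -- realRank bound
  refine le_csInf ?_ ?_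
  · obtain ⟨c, lam, hc⟩ := RRAux.mv_exists hf
    exact ⟨d+1, c, fun _ => 1, lam, hc⟩
  · rintro r ⟨c, aa, bb, hdec⟩
    have hSP : RRAux.ψ f = RRAux.SP d c aa bb := by
      rw [hdec, map_sum]
      exact Finset.sum_congr rfl fun i _ => RRAux.psi_linForm_pow _ _ _ d
    rw [hSP] at hP0 hcount
    exact hcount.trans (RRAux.key r d c aa bb hP0)
end
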